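/- arXiv:2410.24170 — 2 statements merged into one kernel-verified Lean document; each statement's English description precedes it below -/
import Mathlib

section
/- Suppose Assumption A holds. Then, almost surely, lim_{n→∞} max_{u ∈ 𝒯_{τ_n}} outdeg(u, 𝒯_{τ_n}) = ∞; that is, the maximal out-degree in the sequence of trees (𝒯_{τ_n})_{n∈ℕ₀} tends to infinity. -/
set_option linter.unusedSectionVars false
set_option maxHeartbeats 1000000


open MeasureTheory ProbabilityTheory Filter
open scoped ENNReal NNReal Topology

namespace CMJ

/-- Ulam–Harris labels, encoded as *reversed* addresses: `i :: u` is the `(i+1)`-th child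
of `u`, so the Lean child index `i : ℕ` corresponds to the paper's child index `i + 1`,
and the Lean waiting time `X u j` corresponds to the paper's `X(u (j+1))`. -/
abbrev Node : Type := List ℕ

variable {Ω : Type*} [MeasurableSpace Ω]

/-- Birth times: `birth X [] = 0` and
`birth X (i :: u) = birth X u + ∑_{j=0}^{i} X u j`. -/
noncomputable def birth (X : Node → ℕ → Ω → ℝ≥0∞) : Node → Ω → ℝ≥0∞
  | [] => fun _ => 0
  | i :: u => fun ω => birth X u ω + ∑ j ∈ Finset.range (i + 1), X u j ω

/-- The population born before time `t`: `𝒯_t = {u : B(u) ≤ t}`. -/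
def tree (X : Node → ℕ → Ω → ℝ≥0∞) (t : ℝ≥0∞) (ω : Ω) : Set Node :=
  {u | birth X u ω ≤ t}

/-- `τ_k = inf {t ≥ 0 : |𝒯_t| ≥ k}`. -/
noncomputable def tau (X : Node → ℕ → Ω → ℝ≥0∞) (k : ℕ) (ω : Ω) : ℝ≥0∞ :=
  sInf {t : ℝ≥0∞ | (k : ℕ∞) ≤ (tree X t ω).encard}

/-- The `n`-th jump tree `𝒯_{τ_n}`. -/
noncomputable def jumpTree (X : Node → ℕ → Ω → ℝ≥0∞) (n : ℕ) (ω : Ω) : Set Node :=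
  tree X (tau X n ω) ω

/-- Out-degree (number of children) of `u` in the tree `T`. -/
noncomputable def deg (T : Set Node) (u : Node) : ℕ∞ :=
  {i : ℕ | i :: u ∈ T}.encard

open scoped Classical in
/-- Out-degree with the convention `outdeg(u,T) = -∞` (i.e. `⊥`) if `u ∉ T`. -/
noncomputable def degB (T : Set Node) (u : Node) : WithBot ℕ∞ :=
  if u ∈ T then (deg T u : WithBot ℕ∞) else ⊥

/-- `u` attains the maximal out-degree in `T` (this expresses
`outdeg(u,T) = max_{v ∈ T} outdeg(v,T)` with the convention `outdeg(u,T) = -∞`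
for `u ∉ T`). -/
def IsMaxDeg (T : Set Node) (u : Node) : Prop :=
  u ∈ T ∧ ∀ v ∈ T, deg T v ≤ deg T u

/-- `u` is a persistent hub of the tree sequence `T` if it attains the maximal
out-degree for all but finitely many `n`. -/
def IsPersistentHub (T : ℕ → Set Node) (u : Node) : Prop :=
  ∀ᶠ n in atTop, IsMaxDeg (T n) u

section Aux

variable (X : Node → ℕ → Ω → ℝ≥0∞)

lemma birth_nil (ω : Ω) : birth X ([] : Node) ω = 0 := rfl

lemma birth_cons (i : ℕ) (u : Node) (ω : Ω) :
    birth X (i :: u) ω = birth X u ω + ∑ j ∈ Finset.range (i + 1), X u j ω := rfl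

lemma birth_le_birth_cons (i : ℕ) (u : Node) (ω : Ω) :
    birth X u ω ≤ birth X (i :: u) ω := by
  rw [birth_cons]; exact le_self_add

lemma birth_cons_mono {i j : ℕ} (h : j ≤ i) (u : Node) (ω : Ω) :
    birth X (j :: u) ω ≤ birth X (i :: u) ω := by
  rw [birth_cons, birth_cons]
  exact add_le_add_right (Finset.sum_le_sum_of_subset (Finset.range_subset_range.2 (by omega))) _

lemma measurable_birth (hmeas : ∀ u j, Measurable (X u j)) (u : Node) :
    Measurable (birth X u) := by
  induction u with
  | nil => exact measurable_const
  | cons i u ih => exact ih.add (Finset.measurable_sum _ fun j _ => hmeas u j)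

lemma mem_tree {t : ℝ≥0∞} {ω : Ω} {u : Node} : u ∈ tree X t ω ↔ birth X u ω ≤ t := Iff.rfl

lemma tree_mono {s t : ℝ≥0∞} (h : s ≤ t) (ω : Ω) : tree X s ω ⊆ tree X t ω :=
  fun _ hu => le_trans hu h

lemma nil_mem_tree (t : ℝ≥0∞) (ω : Ω) : ([] : Node) ∈ tree X t ω := by
  show birth X ([] : Node) ω ≤ t
  rw [birth_nil]
  exact zero_le

lemma tau_mono (ω : Ω) : Monotone fun n => tau X n ω := by
  intro a b hab
  refine sInf_le_sInf fun t ht => ?_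
  have hba : (a : ℕ∞) ≤ (b : ℕ∞) := by exact_mod_cast hab
  exact le_trans hba ht

lemma encard_tree_of_tau_lt {n : ℕ} {t : ℝ≥0∞} {ω : Ω} (h : tau X n ω < t) :
    (n : ℕ∞) ≤ (tree X t ω).encard := by
  obtain ⟨s, hs, hst⟩ := sInf_lt_iff.1 h
  exact le_trans hs (Set.encard_mono (tree_mono X hst.le ω))

lemma deg_mono {T T' : Set Node} (h : T ⊆ T') (u : Node) : deg T u ≤ deg T' u :=
  Set.encard_mono fun _ hi => h hi

noncomputable def supDeg (T : Set Node) : ℕ∞ := ⨆ u ∈ T, deg T u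

lemma deg_le_supDeg {T : Set Node} {u : Node} (hu : u ∈ T) : deg T u ≤ supDeg T :=
  le_iSup₂ (f := fun v (_ : v ∈ T) => deg T v) u hu

lemma supDeg_mono {T T' : Set Node} (h : T ⊆ T') : supDeg T ≤ supDeg T' :=
  iSup₂_le fun u hu => le_trans (deg_mono h u) (deg_le_supDeg (h hu))

def pathNode (f : ℕ → ℕ) : ℕ → Node
  | 0 => []
  | k+1 => f k :: pathNode f k

@[simp] lemma pathNode_length (f : ℕ → ℕ) (k : ℕ) : (pathNode f k).length = k := by
  induction k with
  | zero => rfl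
  | succ k ih => simp [pathNode, ih]

lemma pathNode_congr {f g : ℕ → ℕ} {k : ℕ} (h : ∀ i < k, f i = g i) :
    pathNode f k = pathNode g k := by
  induction k with
  | zero => rfl
  | succ k ih =>
    simp only [pathNode]
    rw [h k (Nat.lt_succ_self k), ih fun i hi => h i (Nat.lt_succ_of_lt hi)]

lemma exists_pathNode_eq (u : Node) :
    ∃ f : ℕ → ℕ, (∀ i < u.length, f i ∈ u) ∧ pathNode f u.length = u := by
  induction u with
  | nil => exact ⟨fun _ => 0, by simp, rfl⟩
  | cons a v ih =>
    obtain ⟨f, hf, hfv⟩ := ih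
    refine ⟨fun i => if i = v.length then a else f i, ?_, ?_⟩
    · intro i hi
      by_cases h : i = v.length
      · simp [h]
      · have : i < v.length := by
          simp only [List.length_cons] at hi; omega
        simp only [if_neg h]
        exact List.mem_cons_of_mem _ (hf i this)
    · show pathNode _ ((a :: v).length) = a :: v
      simp only [List.length_cons, pathNode, if_pos rfl]
      congr 1
      exact (pathNode_congr fun i hi => if_neg (Nat.ne_of_lt hi)).trans hfv

lemma finite_short_lists (m k : ℕ) :
    {u : Node | u.length ≤ k ∧ ∀ i ∈ u, i < m}.Finite := by
  induction k with
  | zero =>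
    apply Set.Finite.subset (Set.finite_singleton ([] : Node))
    rintro u ⟨hu, -⟩
    simpa using List.length_eq_zero_iff.1 (Nat.le_zero.1 hu)
  | succ k ih =>
    apply Set.Finite.subset
      ((Set.finite_singleton ([] : Node)).union
        ((Set.finite_Iio m).biUnion fun j _ => ih.image (List.cons j)))
    rintro u ⟨hu, hm⟩
    cases u with
    | nil => exact Or.inl rfl
    | cons a v =>
      refine Or.inr (Set.mem_biUnion (hm a List.mem_cons_self) ?_)
      refine ⟨v, ⟨?_, fun i hi => hm i (List.mem_cons_of_mem _ hi)⟩, rfl⟩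
      simpa using Nat.succ_le_succ_iff.1 hu

lemma encard_Iic_nat (i : ℕ) : (Set.Iic i).encard = (i + 1 : ℕ) := by
  rw [← Finset.coe_Iic, Set.encard_coe_eq_coe_finsetCard, Nat.card_Iic]

lemma encard_Iio_nat (m : ℕ) : (Set.Iio m).encard = (m : ℕ) := by
  rw [← Finset.coe_Iio, Set.encard_coe_eq_coe_finsetCard, Nat.card_Iio]

lemma det (ω : Ω)
    (hfin : ∀ i : ℕ, ∑ j ∈ Finset.range i, X ([] : Node) j ω ≠ ⊤)
    (hpath : ∀ m C : ℕ, ∃ k, ∀ f : ℕ → ℕ, (∀ i < k, f i < m) →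
        ¬ birth X (pathNode f k) ω ≤ (C : ℝ≥0∞)) (m : ℕ) :
    ∀ᶠ n in atTop, (m : ℕ∞) ≤ supDeg (jumpTree X n ω) := by
  suffices h : ∃ N, (m : ℕ∞) ≤ supDeg (jumpTree X N ω) by
    obtain ⟨N, hN⟩ := h
    filter_upwards [eventually_ge_atTop N] with n hn
    exact hN.trans (supDeg_mono (tree_mono X (tau_mono X ω hn) ω))
  by_contra hc
  push_neg at hc
  have hroot : ∀ n, ([] : Node) ∈ jumpTree X n ω := fun n => nil_mem_tree X _ ω
  -- case: some tau is ⊤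
  by_cases htop : ∃ n, tau X n ω = ⊤
  · obtain ⟨n, hn⟩ := htop
    have huniv : jumpTree X n ω = Set.univ := by
      ext u
      simp only [jumpTree, Set.mem_univ, iff_true, mem_tree, hn]
      exact le_top
    have hdeg : deg (jumpTree X n ω) ([] : Node) = ⊤ := by
      rw [deg, Set.encard_eq_top_iff]
      apply Set.infinite_coe_iff.1
      rw [huniv]
      have : {i : ℕ | i :: ([] : Node) ∈ (Set.univ : Set Node)} = Set.univ := by
        ext i; simp
      rw [this]
      exact Set.infinite_coe_iff.2 Set.infinite_univ
    have h1 : (⊤ : ℕ∞) ≤ supDeg (jumpTree X n ω) := hdeg ▸ deg_le_supDeg (hroot n)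
    exact absurd (h1.trans_lt (hc n)) (by simp)
  push_neg at htop
  by_cases hE : (⨆ n, tau X n ω) = ⊤
  · -- non-explosive: root gets m children
    have hcm : (∑ j ∈ Finset.range m, X ([] : Node) j ω) < ⨆ n, tau X n ω := by
      rw [hE]; exact (hfin m).lt_top
    obtain ⟨n, hn⟩ := lt_iSup_iff.1 hcm
    have hchild : ∀ i < m, (i :: ([] : Node)) ∈ jumpTree X n ω := by
      intro i hi
      show birth X (i :: ([] : Node)) ω ≤ tau X n ω
      rw [birth_cons, birth_nil, zero_add]
      exact le_trans (Finset.sum_le_sum_of_subset (Finset.range_subset_range.2 hi)) hn.le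
    have hm : (m : ℕ∞) ≤ deg (jumpTree X n ω) ([] : Node) := by
      rw [deg, ← encard_Iio_nat m]
      exact Set.encard_mono fun i hi => hchild i hi
    exact absurd ((hm.trans (deg_le_supDeg (hroot n))).trans_lt (hc n)) (lt_irrefl _)
  -- explosive case
  obtain ⟨C, hC⟩ := ENNReal.exists_nat_gt hE
  obtain ⟨k, hk⟩ := hpath m C
  set A := ⋃ n, jumpTree X n ω with hA
  have hsib : ∀ (i : ℕ) (u : Node), (i :: u) ∈ A → u ∈ A ∧ i < m := by
    intro i u hu
    obtain ⟨n, hn⟩ := Set.mem_iUnion.1 hu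
    have hparent : u ∈ jumpTree X n ω := le_trans (birth_le_birth_cons X i u ω) hn
    have hdeg : ((i + 1 : ℕ) : ℕ∞) ≤ deg (jumpTree X n ω) u := by
      rw [deg, ← encard_Iic_nat i]
      exact Set.encard_mono fun j hj => le_trans (birth_cons_mono X hj u ω) hn
    have hlt : ((i + 1 : ℕ) : ℕ∞) < (m : ℕ∞) :=
      hdeg.trans_lt ((deg_le_supDeg hparent).trans_lt (hc n))
    have : i + 1 < m := by exact_mod_cast hlt
    exact ⟨Set.mem_iUnion.2 ⟨n, hparent⟩, by omega⟩
  have hmemA : ∀ u : Node, u ∈ A → ∀ i ∈ u, i < m := by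
    intro u
    induction u with
    | nil => intro _ i hi; simp at hi
    | cons a v ih =>
      intro hu i hi
      obtain ⟨hv, ham⟩ := hsib a v hu
      rcases List.mem_cons.1 hi with h | h
      · omega
      · exact ih hv i h
  have hbirthA : ∀ u ∈ A, birth X u ω ≤ (C : ℝ≥0∞) := by
    intro u hu
    obtain ⟨n, hn⟩ := Set.mem_iUnion.1 hu
    exact le_trans hn (le_trans (le_iSup (fun n => tau X n ω) n) hC.le)
  have hrootA : ([] : Node) ∈ A := Set.mem_iUnion.2 ⟨0, hroot 0⟩
  have hdropA : ∀ u : Node, u ∈ A → ∀ d, u.drop d ∈ A := by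
    intro u
    induction u with
    | nil => intro _ d; simpa using hrootA
    | cons a v ih =>
      intro hu d
      cases d with
      | zero => simpa using hu
      | succ d => exact ih (hsib a v hu).1 d
  -- A is infinite
  have hAinf : A.Infinite := by
    by_cases hEat : ∃ N, tau X N ω = ⨆ n, tau X n ω
    · obtain ⟨N, hN⟩ := hEat
      have hTN : jumpTree X N ω = tree X (⨆ n, tau X n ω) ω := by
        rw [jumpTree, hN]
      have htreeEinf : (tree X (⨆ n, tau X n ω) ω).Infinite := by
        by_contra hfin'
        rw [Set.not_infinite] at hfin'
        set E := ⨆ n, tau X n ω with hEdef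
        have hbex : ∀ u : Node, ∃ bu : ℝ≥0∞, E < bu ∧
            ∀ i, E < birth X (i :: u) ω → bu ≤ birth X (i :: u) ω := by
          intro u
          by_cases h : ∃ i, E < birth X (i :: u) ω
          · refine ⟨birth X (Nat.find h :: u) ω, Nat.find_spec h, fun i hi => ?_⟩
            rcases lt_or_ge i (Nat.find h) with hlt | hge
            · exact absurd hi (Nat.find_min h hlt)
            · exact birth_cons_mono X hge u ω
          · exact ⟨⊤, lt_top_iff_ne_top.2 hE, fun i hi => absurd ⟨i, hi⟩ h⟩
        choose b hbgt hble using hbex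
        have hne : hfin'.toFinset.Nonempty :=
          ⟨[], (Set.Finite.mem_toFinset hfin').2 (nil_mem_tree X E ω)⟩
        set δ := (hfin'.toFinset.image b).min' (hne.image b) with hδdef
        have hEδ : E < δ := by
          rw [hδdef]
          rw [Finset.lt_min'_iff]
          intro y hy
          obtain ⟨u, _, rfl⟩ := Finset.mem_image.1 hy
          exact hbgt u
        obtain ⟨t, hEt, htδ⟩ := exists_between hEδ
        have hsubE : ∀ u : Node, birth X u ω ≤ t → birth X u ω ≤ E := by
          intro u
          induction u with
          | nil => intro _; rw [birth_nil]; exact zero_le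
          | cons a v ihv =>
            intro hat
            have hvE : v ∈ tree X E ω := ihv (le_trans (birth_le_birth_cons X a v ω) hat)
            by_contra hcon
            push_neg at hcon
            have : δ ≤ birth X (a :: v) ω := by
              refine le_trans ?_ (hble v a hcon)
              rw [hδdef]
              exact Finset.min'_le _ _ (Finset.mem_image_of_mem b ((Set.Finite.mem_toFinset hfin').2 hvE))
            exact absurd (le_trans this hat) (not_le.2 htδ)
        have hcard : ((hfin'.toFinset.card + 1 : ℕ) : ℕ∞) ≤ (tree X t ω).encard := by
          refine encard_tree_of_tau_lt X (lt_of_le_of_lt ?_ hEt)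
          exact le_iSup (fun n => tau X n ω) (hfin'.toFinset.card + 1)
        have hle : (tree X t ω).encard ≤ (hfin'.toFinset.card : ℕ∞) := by
          rw [← Set.Finite.encard_eq_coe_toFinset_card hfin']
          exact Set.encard_mono fun u hu => hsubE u hu
        have : ((hfin'.toFinset.card + 1 : ℕ) : ℕ∞) ≤ (hfin'.toFinset.card : ℕ∞) :=
          le_trans hcard hle
        have : hfin'.toFinset.card + 1 ≤ hfin'.toFinset.card := by exact_mod_cast this
        omega
      exact htreeEinf.mono (by rw [← hTN]; exact Set.subset_iUnion (fun n => jumpTree X n ω) N)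
    · push_neg at hEat
      have hlt : ∀ n : ℕ, tau X n ω < ⨆ n, tau X n ω := fun n =>
        lt_of_le_of_ne (le_iSup (fun n => tau X n ω) n) (hEat n)
      have hcard : ∀ n : ℕ, (n : ℕ∞) ≤ A.encard := by
        intro n
        obtain ⟨n', hn'⟩ := lt_iSup_iff.1 (hlt n)
        refine le_trans (encard_tree_of_tau_lt X hn') ?_
        exact Set.encard_mono (Set.subset_iUnion (fun n => jumpTree X n ω) n')
      by_contra hnotinf
      rw [Set.not_infinite] at hnotinf
      have h1 := hcard (hnotinf.toFinset.card + 1)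
      rw [Set.Finite.encard_eq_coe_toFinset_card hnotinf] at h1
      have : hnotinf.toFinset.card + 1 ≤ hnotinf.toFinset.card := by exact_mod_cast h1
      omega
  -- extract a long path
  have hlong : ∃ u ∈ A, k ≤ u.length := by
    by_contra h
    push_neg at h
    exact hAinf (Set.Finite.subset (finite_short_lists m k)
      fun u hu => ⟨(h u hu).le, hmemA u hu⟩)
  obtain ⟨u, huA, hlen⟩ := hlong
  have hwA : u.drop (u.length - k) ∈ A := hdropA u huA _
  have hwlen : (u.drop (u.length - k)).length = k := by
    rw [List.length_drop]; omega
  obtain ⟨f, hfmem, hfeq⟩ := exists_pathNode_eq (u.drop (u.length - k))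
  rw [hwlen] at hfmem hfeq
  refine hk f (fun i hi => hmemA _ hwA (f i) (hfmem i hi)) ?_
  rw [hfeq]
  exact hbirthA _ hwA

lemma birth_pathNode (f : ℕ → ℕ) (k : ℕ) (ω : Ω) :
    birth X (pathNode f k) ω
      = ∑ l ∈ Finset.range k, ∑ i ∈ Finset.range (f l + 1), X (pathNode f l) i ω := by
  induction k with
  | zero => simp [pathNode, birth_nil]
  | succ k ih =>
    rw [Finset.sum_range_succ, ← ih]
    rfl

lemma count_small {k R : ℕ} (g : Fin k → ℝ≥0∞) {δ Cb : ℝ≥0∞}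
    (hsum : ∑ l : Fin k, g l ≤ Cb) (hRδ : Cb < ((R : ℝ≥0∞) + 1) * δ) :
    (Finset.univ.filter fun l : Fin k => δ < g l).card ≤ R := by
  by_contra hcon
  push_neg at hcon
  have h1 : ((R : ℝ≥0∞) + 1) * δ ≤ ((Finset.univ.filter fun l : Fin k => δ < g l).card : ℝ≥0∞) * δ := by
    refine mul_le_mul_left ?_ δ
    have : ((R + 1 : ℕ) : ℝ≥0∞) ≤ ((Finset.univ.filter fun l : Fin k => δ < g l).card : ℝ≥0∞) := by
      exact_mod_cast hcon
    simpa using this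
  have h2 : ((Finset.univ.filter fun l : Fin k => δ < g l).card : ℝ≥0∞) * δ
      ≤ ∑ l ∈ Finset.univ.filter (fun l : Fin k => δ < g l), g l := by
    rw [← nsmul_eq_mul]
    exact Finset.card_nsmul_le_sum _ _ _ fun l hl => (Finset.mem_filter.1 hl).2.le
  have h3 : ∑ l ∈ Finset.univ.filter (fun l : Fin k => δ < g l), g l ≤ ∑ l : Fin k, g l :=
    Finset.sum_le_sum_of_subset (Finset.filter_subset _ _)
  exact absurd (le_trans h1 (le_trans h2 (le_trans h3 hsum))) (not_le.2 hRδ)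

def fn {k m : ℕ} (p : Fin k → Fin m) : ℕ → ℕ := fun i => if h : i < k then (p ⟨i, h⟩ : ℕ) else 0

lemma fn_val {k m : ℕ} (p : Fin k → Fin m) (l : Fin k) : fn p l.val = (p l : ℕ) := by
  simp [fn, l.isLt]

lemma fn_lt {k m : ℕ} [NeZero m] (p : Fin k → Fin m) (i : ℕ) : fn p i < m ∨ fn p i = 0 := by
  unfold fn
  split
  · exact Or.inl (Fin.isLt _)
  · exact Or.inr rfl

lemma gap_ident (P : Measure Ω) (hmeas : ∀ u j, Measurable (X u j))
    (hnodes_ident : ∀ u : Node, Measure.map (fun ω (j : ℕ) => X u j ω) P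
      = Measure.map (fun ω (j : ℕ) => X ([] : Node) j ω) P)
    (δ : ℝ≥0∞) (v : Node) (a : ℕ) :
    P {ω | ∑ i ∈ Finset.range (a + 1), X v i ω ≤ δ}
      = P {ω | ∑ i ∈ Finset.range (a + 1), X ([] : Node) i ω ≤ δ} := by
  have hXv : ∀ w : Node, Measurable fun ω (j : ℕ) => X w j ω := fun w =>
    measurable_pi_lambda _ fun j => hmeas w j
  have hAme : MeasurableSet {g : ℕ → ℝ≥0∞ | ∑ i ∈ Finset.range (a + 1), g i ≤ δ} :=
    measurableSet_le (Finset.measurable_sum _ fun i _ => measurable_pi_apply i) measurable_const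
  have h1 : {ω | ∑ i ∈ Finset.range (a + 1), X v i ω ≤ δ}
      = (fun ω (j : ℕ) => X v j ω) ⁻¹' {g | ∑ i ∈ Finset.range (a + 1), g i ≤ δ} := rfl
  have h2 : {ω | ∑ i ∈ Finset.range (a + 1), X ([] : Node) i ω ≤ δ}
      = (fun ω (j : ℕ) => X ([] : Node) j ω) ⁻¹' {g | ∑ i ∈ Finset.range (a + 1), g i ≤ δ} := rfl
  rw [h1, h2, ← Measure.map_apply (hXv v) hAme, ← Measure.map_apply (hXv ([] : Node)) hAme,
    hnodes_ident v]

lemma indep_gaps (P : Measure Ω) (hmeas : ∀ u j, Measurable (X u j))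
    (hnodes_indep : iIndepFun (fun u ω (j : ℕ) => X u j ω) P)
    (δ : ℝ≥0∞) (f : ℕ → ℕ) (k : ℕ) (T : Finset (Fin k)) :
    P (⋂ l ∈ T, {ω | ∑ i ∈ Finset.range (f l.val + 1), X (pathNode f l.val) i ω ≤ δ}) =
      ∏ l ∈ T, P {ω | ∑ i ∈ Finset.range (f l.val + 1), X (pathNode f l.val) i ω ≤ δ} := by
  classical
  set sets : Node → Set (ℕ → ℝ≥0∞) := fun v => {g | ∑ i ∈ Finset.range (f v.length + 1), g i ≤ δ}
    with hsets
  have hmeasets : ∀ v : Node, MeasurableSet (sets v) := fun v =>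
    measurableSet_le (Finset.measurable_sum _ fun i _ => measurable_pi_apply i) measurable_const
  have hinj : Function.Injective (fun l : Fin k => pathNode f l.val) := by
    intro a b hab
    have h := congrArg List.length hab
    simp only [pathNode_length] at h
    exact Fin.val_injective h
  have key := hnodes_indep.measure_inter_preimage_eq_mul
    (T.image fun l : Fin k => pathNode f l.val) (sets := sets) (fun v _ => hmeasets v)
  rw [Finset.set_biInter_finset_image, Finset.prod_image (fun a _ b _ h => hinj h)] at key
  have hev : ∀ l : Fin k,
      (fun ω (j : ℕ) => X (pathNode f l.val) j ω) ⁻¹' sets (pathNode f l.val)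
        = {ω | ∑ i ∈ Finset.range (f l.val + 1), X (pathNode f l.val) i ω ≤ δ} := by
    intro l
    ext ω
    simp [hsets]
  simp_rw [hev] at key
  exact key

lemma tendsto_aux (R : ℕ) {θ : ℝ≥0∞} (hθ : θ < 1) (c : ℝ≥0∞) (hc : c ≠ ⊤) :
    Tendsto (fun n : ℕ => ((n + R : ℕ) : ℝ≥0∞) ^ R * θ ^ n * c) atTop (𝓝 0) := by
  -- replace θ by θ' := max θ 2⁻¹ which is positive
  set θ' : ℝ≥0∞ := max θ 2⁻¹ with hθ'def
  have hθ'1 : θ' < 1 := by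
    rw [hθ'def, max_lt_iff]
    constructor
    · exact hθ
    · rw [ENNReal.inv_lt_one]
      exact_mod_cast one_lt_two
  have hθ'0 : θ' ≠ 0 := by
    rw [hθ'def]
    refine ne_of_gt (lt_of_lt_of_le ?_ (le_max_right _ _))
    simp
  have hθθ' : θ ≤ θ' := le_max_left _ _
  have hθ't : θ' ≠ ⊤ := hθ'1.ne_top
  have hct : c = (c.toNNReal : ℝ≥0∞) := (ENNReal.coe_toNNReal hc).symm
  have hθ't2 : θ' = (θ'.toNNReal : ℝ≥0∞) := (ENNReal.coe_toNNReal hθ't).symm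
  set θ0 : ℝ≥0 := θ'.toNNReal with hθ0def
  set c0 : ℝ≥0 := c.toNNReal with hc0def
  have hθ0lt : (θ0 : ℝ) < 1 := by
    have := hθ'1
    rw [hθ't2] at this
    exact_mod_cast this
  have hθ0pos : (0 : ℝ) < θ0 := by
    have : θ0 ≠ 0 := fun h => hθ'0 (by rw [hθ't2, h]; simp)
    positivity
  -- the NNReal-level bound tendsto
  have hreal : Tendsto (fun n : ℕ => ((n + R : ℕ) : ℝ) ^ R * (θ0 : ℝ) ^ n * (c0 : ℝ)) atTop (𝓝 0) := by
    have h1 : Tendsto (fun n : ℕ => ((n : ℝ)) ^ R * (θ0 : ℝ) ^ n) atTop (𝓝 0) :=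
      (summable_pow_mul_geometric_of_norm_lt_one (R := ℝ) R
        (by rwa [Real.norm_eq_abs, abs_of_nonneg hθ0pos.le])).tendsto_atTop_zero
    have h2 := h1.comp (tendsto_add_atTop_nat R)
    have h3 : Tendsto (fun n : ℕ => (((n + R : ℕ) : ℝ) ^ R * (θ0 : ℝ) ^ (n + R))
        * (((θ0 : ℝ) ^ R)⁻¹ * (c0 : ℝ))) atTop (𝓝 0) := by
      simpa using h2.mul_const (((θ0 : ℝ) ^ R)⁻¹ * (c0 : ℝ))
    refine h3.congr fun n => ?_
    have hpow : (θ0 : ℝ) ^ R ≠ 0 := pow_ne_zero R hθ0pos.ne'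
    field_simp [pow_add]
    ring
  have hnn : Tendsto (fun n : ℕ => (((n + R : ℕ) : ℝ≥0) ^ R * θ0 ^ n * c0 : ℝ≥0)) atTop (𝓝 0) := by
    rw [← NNReal.tendsto_coe]
    push_cast
    refine hreal.congr fun n => ?_
    push_cast
    ring
  have hcoe : Tendsto (fun n : ℕ => ((((n + R : ℕ) : ℝ≥0) ^ R * θ0 ^ n * c0 : ℝ≥0) : ℝ≥0∞))
      atTop (𝓝 0) := by
    rw [← ENNReal.coe_zero]
    exact ENNReal.tendsto_coe.2 hnn
  have hupper : ∀ n : ℕ, ((n + R : ℕ) : ℝ≥0∞) ^ R * θ ^ n * c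
      ≤ ((((n + R : ℕ) : ℝ≥0) ^ R * θ0 ^ n * c0 : ℝ≥0) : ℝ≥0∞) := by
    intro n
    push_cast
    rw [← hθ't2, ← hct]
    gcongr
  exact tendsto_of_tendsto_of_tendsto_of_le_of_le tendsto_const_nhds hcoe
    (fun n => zero_le) hupper

lemma as_H2 (P : Measure Ω) [IsProbabilityMeasure P]
    (hmeas : ∀ u j, Measurable (X u j))
    (hnodes_indep : iIndepFun (fun u ω (j : ℕ) => X u j ω) P)
    (hnodes_ident : ∀ u : Node, Measure.map (fun ω (j : ℕ) => X u j ω) P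
      = Measure.map (fun ω (j : ℕ) => X ([] : Node) j ω) P)
    (hA1 : iIndepFun (fun j => X ([] : Node) j) P)
    (hA3 : ∑' j : ℕ, ∏ i ∈ Finset.range (j + 1), P {ω | X ([] : Node) i ω = 0} < 1)
    (m C : ℕ) :
    ∀ᵐ ω ∂P, ∃ k, ∀ f : ℕ → ℕ, (∀ i < k, f i < m) →
      ¬ birth X (pathNode f k) ω ≤ (C : ℝ≥0∞) := by
  classical
  -- measurability of partial sums
  have hSmeas : ∀ j : ℕ, Measurable fun ω => ∑ i ∈ Finset.range (j + 1), X ([] : Node) i ω :=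
    fun j => Finset.measurable_sum _ fun i _ => hmeas _ i
  -- Step A : probability of zero gap as a product
  have hzero : ∀ j : ℕ, P {ω | ∑ i ∈ Finset.range (j + 1), X ([] : Node) i ω = 0}
      = ∏ i ∈ Finset.range (j + 1), P {ω | X ([] : Node) i ω = 0} := by
    intro j
    have hset : {ω | ∑ i ∈ Finset.range (j + 1), X ([] : Node) i ω = 0}
        = ⋂ i ∈ Finset.range (j + 1), (X ([] : Node) i) ⁻¹' {0} := by
      ext ω
      simp [Finset.sum_eq_zero_iff]
    rw [hset, hA1.measure_inter_preimage_eq_mul _ (fun i _ => measurableSet_singleton 0)]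
    refine Finset.prod_congr rfl fun i _ => ?_
    congr 1
  have hL : (∑ j ∈ Finset.range m, P {ω | ∑ i ∈ Finset.range (j + 1), X ([] : Node) i ω = 0})
      < 1 := by
    refine lt_of_le_of_lt ?_ hA3
    rw [Finset.sum_congr rfl fun j _ => hzero j]
    exact ENNReal.sum_le_tsum _
  obtain ⟨θ, hLθ, hθ1⟩ := exists_between hL
  -- Step C : choose δ with ∑_{j<m} P(S_{j+1} ≤ δ) < θ
  have htendj : ∀ j : ℕ, Tendsto
      (fun d : ℕ => P {ω | ∑ i ∈ Finset.range (j + 1), X ([] : Node) i ω ≤ ((d : ℝ≥0∞) + 1)⁻¹})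
      atTop (𝓝 (P {ω | ∑ i ∈ Finset.range (j + 1), X ([] : Node) i ω = 0})) := by
    intro j
    have hmono : Antitone fun d : ℕ =>
        {ω | ∑ i ∈ Finset.range (j + 1), X ([] : Node) i ω ≤ ((d : ℝ≥0∞) + 1)⁻¹} := by
      intro d d' hdd ω hω
      have h1 : ((d : ℝ≥0∞)) ≤ (d' : ℝ≥0∞) := by exact_mod_cast hdd
      exact le_trans hω (ENNReal.inv_le_inv.2 (add_le_add_left h1 1))
    have hmeas' : ∀ d : ℕ, NullMeasurableSet
        {ω | ∑ i ∈ Finset.range (j + 1), X ([] : Node) i ω ≤ ((d : ℝ≥0∞) + 1)⁻¹} P :=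
      fun d => (measurableSet_le (hSmeas j) measurable_const).nullMeasurableSet
    have hint : (⋂ d : ℕ, {ω | ∑ i ∈ Finset.range (j + 1), X ([] : Node) i ω ≤ ((d : ℝ≥0∞) + 1)⁻¹})
        = {ω | ∑ i ∈ Finset.range (j + 1), X ([] : Node) i ω = 0} := by
      ext ω
      simp only [Set.mem_iInter, Set.mem_setOf_eq]
      constructor
      · intro h
        by_contra hne
        obtain ⟨nn, hnn⟩ := ENNReal.exists_inv_nat_lt hne
        have hmono2 : ((nn : ℝ≥0∞) + 1)⁻¹ ≤ ((nn : ℝ≥0∞))⁻¹ :=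
          ENNReal.inv_le_inv.2 le_self_add
        exact absurd (h nn) (not_le.2 (lt_of_le_of_lt hmono2 hnn))
      · intro h d
        rw [h]
        exact zero_le
    have := tendsto_measure_iInter_atTop hmeas' hmono ⟨0, measure_ne_top P _⟩
    rw [hint] at this
    exact this
  have htend : Tendsto
      (fun d : ℕ => ∑ j ∈ Finset.range m,
        P {ω | ∑ i ∈ Finset.range (j + 1), X ([] : Node) i ω ≤ ((d : ℝ≥0∞) + 1)⁻¹})
      atTop (𝓝 (∑ j ∈ Finset.range m,
        P {ω | ∑ i ∈ Finset.range (j + 1), X ([] : Node) i ω = 0})) :=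
    tendsto_finset_sum _ fun j _ => htendj j
  obtain ⟨d, hd⟩ := (htend.eventually_lt_const hLθ).exists
  set δ : ℝ≥0∞ := ((d : ℝ≥0∞) + 1)⁻¹ with hδdef
  set R : ℕ := C * (d + 1) with hRdef
  set pr : ℕ → ℝ≥0∞ := fun j => P {ω | ∑ i ∈ Finset.range (j + 1), X ([] : Node) i ω ≤ δ}
    with hprdef
  set μ : ℝ≥0∞ := ∑ j ∈ Finset.range m, pr j with hμdef
  have hμθ : μ < θ := hd
  have hd1ne0 : ((d : ℝ≥0∞) + 1) ≠ 0 := by simp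
  have hd1net : ((d : ℝ≥0∞) + 1) ≠ ⊤ := by
    simp [ENNReal.add_eq_top]
  have hδne0 : δ ≠ 0 := ENNReal.inv_ne_zero.2 hd1net
  have hRδ : (C : ℝ≥0∞) < ((R : ℝ≥0∞) + 1) * δ := by
    have heq : ((R : ℝ≥0∞) + 1) * δ = (C : ℝ≥0∞) + δ := by
      rw [hRdef, hδdef]
      push_cast
      rw [add_mul, mul_assoc, ENNReal.mul_inv_cancel hd1ne0 hd1net, mul_one, one_mul]
    rw [heq]
    exact ENNReal.lt_add_right (by simp) hδne0
  -- the main estimate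
  have hmain : ∀ n : ℕ,
      P {ω | ∃ f : ℕ → ℕ, (∀ i < n + R, f i < m) ∧ birth X (pathNode f (n + R)) ω ≤ (C : ℝ≥0∞)}
        ≤ ((n + R : ℕ) : ℝ≥0∞) ^ R * θ ^ n * (m : ℝ≥0∞) ^ R := by
    intro n
    set k := n + R with hkdef
    have hcover : {ω | ∃ f : ℕ → ℕ, (∀ i < k, f i < m) ∧ birth X (pathNode f k) ω ≤ (C : ℝ≥0∞)}
        ⊆ ⋃ p ∈ (Finset.univ : Finset (Fin k → Fin m)),
            {ω | birth X (pathNode (fn p) k) ω ≤ (C : ℝ≥0∞)} := by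
      rintro ω ⟨f, hf, hb⟩
      refine Set.mem_iUnion₂.2 ⟨fun l : Fin k => (⟨f l.val, hf l.val l.isLt⟩ : Fin m),
        Finset.mem_univ _, ?_⟩
      have hagree : ∀ i < k, fn (fun l : Fin k => (⟨f l.val, hf l.val l.isLt⟩ : Fin m)) i = f i := by
        intro i hi
        simp [fn, hi]
      show birth X (pathNode _ k) ω ≤ (C : ℝ≥0∞)
      rw [pathNode_congr hagree]
      exact hb
    refine le_trans (measure_mono hcover) (le_trans (measure_biUnion_finset_le _ _) ?_)
    have hpath_bound : ∀ p : Fin k → Fin m,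
        P {ω | birth X (pathNode (fn p) k) ω ≤ (C : ℝ≥0∞)}
          ≤ ∑ T ∈ Finset.powersetCard (k - R) (Finset.univ : Finset (Fin k)),
              ∏ l ∈ T, pr (fn p l.val) := by
      intro p
      have hincl : {ω | birth X (pathNode (fn p) k) ω ≤ (C : ℝ≥0∞)} ⊆
          ⋃ T ∈ Finset.powersetCard (k - R) (Finset.univ : Finset (Fin k)),
            ⋂ l ∈ T, {ω | ∑ i ∈ Finset.range (fn p l.val + 1), X (pathNode (fn p) l.val) i ω ≤ δ} := by
        intro ω hω
        set g : Fin k → ℝ≥0∞ :=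
          fun l => ∑ i ∈ Finset.range (fn p l.val + 1), X (pathNode (fn p) l.val) i ω with hg
        have hsum : ∑ l : Fin k, g l ≤ (C : ℝ≥0∞) := by
          rw [hg]
          rw [Fin.sum_univ_eq_sum_range
            (fun j => ∑ i ∈ Finset.range (fn p j + 1), X (pathNode (fn p) j) i ω) k]
          rw [← birth_pathNode]
          exact hω
        have hbig : (Finset.univ.filter fun l : Fin k => δ < g l).card ≤ R :=
          count_small g hsum hRδ
        have hsmall : k - R ≤ (Finset.univ \ (Finset.univ.filter fun l : Fin k => δ < g l)).card := by
          rw [Finset.card_sdiff_of_subset (Finset.subset_univ _), Finset.card_univ, Fintype.card_fin]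
          omega
        obtain ⟨T, hTsub, hTcard⟩ := Finset.exists_subset_card_eq hsmall
        refine Set.mem_iUnion₂.2 ⟨T, Finset.mem_powersetCard.2 ⟨Finset.subset_univ T, hTcard⟩, ?_⟩
        refine Set.mem_iInter₂.2 fun l hl => ?_
        have hnb : l ∉ Finset.univ.filter fun l : Fin k => δ < g l :=
          (Finset.mem_sdiff.1 (hTsub hl)).2
        have : ¬ δ < g l := fun hlt => hnb (Finset.mem_filter.2 ⟨Finset.mem_univ _, hlt⟩)
        exact not_lt.1 this
      refine le_trans (measure_mono hincl) (le_trans (measure_biUnion_finset_le _ _) ?_)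
      refine Finset.sum_le_sum fun T hT => ?_
      rw [indep_gaps X P hmeas hnodes_indep δ (fn p) k T]
      refine le_of_eq (Finset.prod_congr rfl fun l hl => ?_)
      rw [gap_ident X P hmeas hnodes_ident δ (pathNode (fn p) l.val) (fn p l.val)]
    refine le_trans (Finset.sum_le_sum fun p _ => hpath_bound p) ?_
    rw [Finset.sum_comm]
    simp_rw [fn_val]
    have hfact : ∀ T ∈ Finset.powersetCard (k - R) (Finset.univ : Finset (Fin k)),
        (∑ p ∈ (Finset.univ : Finset (Fin k → Fin m)), ∏ l ∈ T, pr ((p l : ℕ)))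
          = μ ^ (k - R) * (m : ℝ≥0∞) ^ (k - (k - R)) := by
      intro T hT
      obtain ⟨hTsub, hTcard⟩ := Finset.mem_powersetCard.1 hT
      have h1 : ∀ p : Fin k → Fin m, (∏ l ∈ T, pr ((p l : ℕ)))
          = ∏ l : Fin k, (if l ∈ T then pr ((p l : ℕ)) else 1) :=
        fun p => (Finset.prod_congr rfl fun l hl => (if_pos hl).symm).trans
          (Finset.prod_subset (Finset.subset_univ T) fun x _ hx => if_neg hx)
      have h2 : ∀ l : Fin k,
          (∑ j ∈ (Finset.univ : Finset (Fin m)), if l ∈ T then pr ((j : ℕ)) else 1)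
            = if l ∈ T then μ else (m : ℝ≥0∞) := by
        intro l
        by_cases hl : l ∈ T
        · simp only [if_pos hl]
          rw [hμdef, ← Fin.sum_univ_eq_sum_range pr m]
        · simp only [if_neg hl]
          rw [Finset.sum_const, Finset.card_univ, Fintype.card_fin, nsmul_eq_mul, mul_one]
      have h3 : ∏ l ∈ Finset.univ \ T, (if l ∈ T then μ else (m : ℝ≥0∞))
          = (m : ℝ≥0∞) ^ (k - (k - R)) := by
        rw [Finset.prod_congr rfl fun l hl => if_neg (Finset.mem_sdiff.1 hl).2, Finset.prod_const]
        congr 1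
        rw [Finset.card_sdiff_of_subset (Finset.subset_univ T), Finset.card_univ, Fintype.card_fin, hTcard]
      have h4 : ∏ l ∈ T, (if l ∈ T then μ else (m : ℝ≥0∞)) = μ ^ (k - R) := by
        rw [Finset.prod_congr rfl fun l hl => if_pos hl, Finset.prod_const, hTcard]
      calc (∑ p ∈ (Finset.univ : Finset (Fin k → Fin m)), ∏ l ∈ T, pr ((p l : ℕ)))
          = ∑ p ∈ Fintype.piFinset (fun _ : Fin k => (Finset.univ : Finset (Fin m))),
              ∏ l : Fin k, (if l ∈ T then pr ((p l : ℕ)) else 1) := by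
            rw [Fintype.piFinset_univ]
            exact Finset.sum_congr rfl fun p _ => h1 p
        _ = ∏ l : Fin k, ∑ j ∈ (Finset.univ : Finset (Fin m)), (if l ∈ T then pr ((j : ℕ)) else 1) :=
            (Finset.prod_univ_sum (fun _ : Fin k => (Finset.univ : Finset (Fin m)))
              (fun l j => if l ∈ T then pr ((j : ℕ)) else 1)).symm
        _ = ∏ l : Fin k, (if l ∈ T then μ else (m : ℝ≥0∞)) := Finset.prod_congr rfl fun l _ => h2 l
        _ = μ ^ (k - R) * (m : ℝ≥0∞) ^ (k - (k - R)) := by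
            rw [← Finset.prod_sdiff (Finset.subset_univ T), h3, h4, mul_comm]
    rw [Finset.sum_congr rfl hfact, Finset.sum_const, Finset.card_powersetCard,
      Finset.card_univ, Fintype.card_fin, nsmul_eq_mul]
    have hk1 : k - R = n := by omega
    have hk2 : k - (k - R) = R := by omega
    rw [hk2, hk1]
    have hchoose : k.choose n = k.choose R := by
      rw [← hk1]
      exact Nat.choose_symm (by omega)
    rw [hchoose, ← mul_assoc]
    have hg1 : ((k.choose R : ℕ) : ℝ≥0∞) ≤ ((k : ℕ) : ℝ≥0∞) ^ R := by
      exact_mod_cast Nat.choose_le_pow k R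
    have hg2 : μ ^ n ≤ θ ^ n := pow_le_pow_left' hμθ.le n
    exact mul_le_mul' (mul_le_mul' hg1 hg2) (le_refl _)
  -- conclusion
  rw [ae_iff]
  have hsub : ∀ n : ℕ, {ω | ¬ ∃ k, ∀ f : ℕ → ℕ, (∀ i < k, f i < m) →
      ¬ birth X (pathNode f k) ω ≤ (C : ℝ≥0∞)}
        ⊆ {ω | ∃ f : ℕ → ℕ, (∀ i < n + R, f i < m) ∧ birth X (pathNode f (n + R)) ω ≤ (C : ℝ≥0∞)} := by
    intro n ω hω
    simp only [Set.mem_setOf_eq, not_exists, not_forall] at hω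
    obtain ⟨f, hf, hb⟩ := hω (n + R)
    exact ⟨f, hf, not_not.1 hb⟩
  refine le_antisymm ?_ zero_le
  refine ge_of_tendsto (tendsto_aux R hθ1 ((m : ℝ≥0∞) ^ R) ?_) ?_
  · exact (ENNReal.pow_ne_top (by simp))
  · exact Filter.Eventually.of_forall fun n =>
      le_trans (measure_mono (hsub n)) (hmain n)

end Aux

/-- under Assumption A, almost surely the maximal out-degree in the
sequence of trees `(𝒯_{τ_n})_{n∈ℕ₀}` tends to infinity. -/
theorem maxDegree_tendsto_top
    (P : Measure Ω) [IsProbabilityMeasure P]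
    (X : Node → ℕ → Ω → ℝ≥0∞)
    (hmeas : ∀ u j, Measurable (X u j))
    -- the sequences `(X(u ·))_u` are i.i.d. across nodes
    (hnodes_indep : iIndepFun
      (fun u ω (j : ℕ) => X u j ω) P)
    (hnodes_ident : ∀ u : Node,
      Measure.map (fun ω (j : ℕ) => X u j ω) P = Measure.map (fun ω (j : ℕ) => X [] j ω) P)
    -- Assumption A (i): the waiting times `X_j` are mutually independent
    (hA1 : iIndepFun (fun j => X [] j) P)
    -- Assumption A (ii): `X_j < ∞` almost surely
    (hA2 : ∀ j : ℕ, ∀ᵐ ω ∂P, X [] j ω < ⊤)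
    -- Assumption A (iii): `∑_{j=1}^∞ ∏_{i=1}^{j} P(X_i = 0) < 1`
    (hA3 : ∑' j : ℕ, ∏ i ∈ Finset.range (j + 1), P {ω | X [] i ω = 0} < 1) :
    ∀ᵐ ω ∂P, ∀ m : ℕ, ∀ᶠ n in atTop,
      (m : ℕ∞) ≤ ⨆ u ∈ jumpTree X n ω, deg (jumpTree X n ω) u := by
  have h1 : ∀ᵐ ω ∂P, ∀ i : ℕ, ∑ j ∈ Finset.range i, X ([] : Node) j ω ≠ ⊤ := by
    have hae := ae_all_iff.2 hA2
    filter_upwards [hae] with ω hω i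
    exact (ENNReal.sum_lt_top.2 fun j _ => hω j).ne
  have h2 : ∀ᵐ ω ∂P, ∀ m C : ℕ, ∃ k, ∀ f : ℕ → ℕ, (∀ i < k, f i < m) →
      ¬ birth X (pathNode f k) ω ≤ (C : ℝ≥0∞) := by
    rw [ae_all_iff]
    intro m
    rw [ae_all_iff]
    intro C
    exact as_H2 X P hmeas hnodes_indep hnodes_ident hA1 hA3 m C
  filter_upwards [h1, h2] with ω hω1 hω2 m
  exact det X ω hω1 hω2 m

end CMJ
end

section
/- Suppose Assumption A holds and let K ∈ ℕ. Say u = u₁⋯u_m ∈ 𝒰 is K-moderate if u_i ≤ K for every i ≤ m. Then, almost surely, for every t ∈ [0,∞) the set {u ∈ 𝒯_t : u is K-moderate} is finite. -/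
open MeasureTheory ProbabilityTheory Filter
open scoped ENNReal
open scoped Topology

namespace CMJ

variable {Ω : Type*} [MeasurableSpace Ω]

/-! ### The Laplace-type functional `phi` -/

noncomputable def phi (l : ℝ) (x : ℝ≥0∞) : ℝ≥0∞ :=
  if x = ⊤ then 0 else ENNReal.ofReal (Real.exp (-(l * x.toReal)))

lemma phi_top (l : ℝ) : phi l ⊤ = 0 := if_pos rfl

lemma phi_ne_top (l : ℝ) {x : ℝ≥0∞} (hx : x ≠ ⊤) :
    phi l x = ENNReal.ofReal (Real.exp (-(l * x.toReal))) := if_neg hx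

lemma phi_zero (l : ℝ) : phi l 0 = 1 := by
  simp [phi]

lemma phi_le_one (l : ℝ) (hl : 0 ≤ l) (x : ℝ≥0∞) : phi l x ≤ 1 := by
  unfold phi
  split
  · exact zero_le_one
  · rw [← ENNReal.ofReal_one]
    apply ENNReal.ofReal_le_ofReal
    rw [← Real.exp_zero]
    exact Real.exp_le_exp.mpr (neg_nonpos.mpr (mul_nonneg hl ENNReal.toReal_nonneg))

lemma phi_add (l : ℝ) (a b : ℝ≥0∞) : phi l (a + b) = phi l a * phi l b := by
  rcases eq_or_ne a ⊤ with ha | ha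
  · simp [ha, phi_top]
  rcases eq_or_ne b ⊤ with hb | hb
  · simp [hb, phi_top, phi_ne_top l ha]
  rw [phi_ne_top l ha, phi_ne_top l hb, phi_ne_top l (ENNReal.add_ne_top.mpr ⟨ha, hb⟩),
    ← ENNReal.ofReal_mul (Real.exp_nonneg _), ← Real.exp_add]
  congr 2
  rw [ENNReal.toReal_add ha hb]
  ring

lemma phi_sum {ι : Type*} (l : ℝ) (s : Finset ι) (g : ι → ℝ≥0∞) :
    phi l (∑ i ∈ s, g i) = ∏ i ∈ s, phi l (g i) := by
  classical
  induction s using Finset.induction_on with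
  | empty => simp [phi_zero]
  | insert _ _ ha ih => rw [Finset.sum_insert ha, Finset.prod_insert ha, phi_add, ih]

lemma measurable_phi (l : ℝ) : Measurable (phi l) := by
  unfold phi
  exact Measurable.ite (measurableSet_singleton ⊤) measurable_const
    (ENNReal.measurable_ofReal.comp (Real.measurable_exp.comp
      ((measurable_const.mul ENNReal.measurable_toReal).neg)))

lemma phi_tendsto (x : ℝ≥0∞) :
    Tendsto (fun m : ℕ => phi m x) atTop (𝓝 (if x = 0 then 1 else 0)) := by
  rcases eq_or_ne x 0 with h0 | h0
  · simpa [h0, phi_zero] using tendsto_const_nhds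
  rcases eq_or_ne x ⊤ with ht | ht
  · simpa [ht, phi_top, h0] using tendsto_const_nhds
  · rw [if_neg h0]
    have hx : 0 < x.toReal := ENNReal.toReal_pos h0 ht
    have hr : ∀ m : ℕ, phi (m : ℝ) x = ENNReal.ofReal (Real.exp (-((m : ℝ) * x.toReal))) :=
      fun m => phi_ne_top _ ht
    simp only [hr]
    rw [show (0 : ℝ≥0∞) = ENNReal.ofReal 0 from ENNReal.ofReal_zero.symm]
    apply ENNReal.tendsto_ofReal
    have h1 : Tendsto (fun m : ℕ => (m : ℝ) * x.toReal) atTop atTop :=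
      tendsto_natCast_atTop_atTop.atTop_mul_const hx
    exact Real.tendsto_exp_atBot.comp (tendsto_neg_atTop_atBot.comp h1)

lemma one_le_mul_phi (l : ℝ) (hl : 0 ≤ l) (n : ℕ) {x : ℝ≥0∞} (hx : x ≤ n) :
    1 ≤ ENNReal.ofReal (Real.exp (l * n)) * phi l x := by
  have hxt : x ≠ ⊤ := (lt_of_le_of_lt hx (ENNReal.natCast_lt_top n)).ne
  have hxr : x.toReal ≤ (n : ℝ) := by
    have := ENNReal.toReal_mono (ENNReal.natCast_ne_top n) hx
    simpa using this
  rw [phi_ne_top l hxt, ← ENNReal.ofReal_mul (Real.exp_nonneg _), ← Real.exp_add]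
  calc (1 : ℝ≥0∞) = ENNReal.ofReal (Real.exp 0) := by simp
    _ ≤ ENNReal.ofReal (Real.exp (l * n + -(l * x.toReal))) := by
        apply ENNReal.ofReal_le_ofReal
        apply Real.exp_le_exp.mpr
        have := mul_le_mul_of_nonneg_left hxr hl
        linarith

/-! ### Independence: lintegral of products -/

lemma lintegral_finset_prod_of_iIndepFun {ι : Type*} (P : Measure Ω) [IsProbabilityMeasure P]
    (f : ι → Ω → ℝ≥0∞) (hf : ∀ i, Measurable (f i))
    (hind : iIndepFun f P) (T : Finset ι) :
    ∫⁻ ω, ∏ i ∈ T, f i ω ∂P = ∏ i ∈ T, ∫⁻ ω, f i ω ∂P := by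
  classical
  induction T using Finset.induction_on with
  | empty => simp
  | @insert a T ha ih =>
    have hindep : IndepFun (fun ω => ∏ i ∈ T, f i ω) (f a) P := by
      have h := hind.indepFun_finsetProd_of_notMem hf ha
      have : (∏ j ∈ T, f j) = fun ω => ∏ i ∈ T, f i ω := by
        funext ω; simp
      rwa [this] at h
    have hmul := lintegral_mul_eq_lintegral_mul_lintegral_of_indepFun
      (T.measurable_prod fun i _ => hf i) (hf a) hindep
    calc ∫⁻ ω, ∏ i ∈ insert a T, f i ω ∂P
        = ∫⁻ ω, ((fun ω => ∏ i ∈ T, f i ω) * f a) ω ∂P := by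
          apply lintegral_congr; intro ω
          simp [Finset.prod_insert ha, mul_comm]
      _ = (∫⁻ ω, ∏ i ∈ T, f i ω ∂P) * ∫⁻ ω, f a ω ∂P := hmul
      _ = ∏ i ∈ insert a T, ∫⁻ ω, f i ω ∂P := by
          rw [ih, Finset.prod_insert ha, mul_comm]

/-! ### Measurability and product structure of `birth` -/

lemma birth_measurable (X : Node → ℕ → Ω → ℝ≥0∞) (hmeas : ∀ u j, Measurable (X u j))
    (u : Node) : Measurable (birth X u) := by
  induction u with
  | nil => simp only [birth]; exact measurable_const
  | cons i u ih =>
    simp only [birth]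
    exact ih.add (Finset.measurable_sum _ fun j _ => hmeas u j)

lemma phi_birth_eq (l : ℝ) (X : Node → ℕ → Ω → ℝ≥0∞) (u : Node) (ω : Ω) :
    phi l (birth X u ω) =
      ∏ k ∈ Finset.range u.length,
        phi l (∑ j ∈ Finset.range (u.getD k 0 + 1), X (u.drop (k + 1)) j ω) := by
  induction u with
  | nil => simp [birth, phi_zero]
  | cons a u ih =>
    rw [show birth X (a :: u) ω
        = birth X u ω + ∑ j ∈ Finset.range (a + 1), X u j ω from rfl,
      phi_add, ih, List.length_cons, Finset.prod_range_succ']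
    simp [List.getD_cons_succ, List.drop_succ_cons]


lemma lintegral_phi_birth
    (P : Measure Ω) [IsProbabilityMeasure P]
    (X : Node → ℕ → Ω → ℝ≥0∞) (hmeas : ∀ u j, Measurable (X u j))
    (hnodes_indep : iIndepFun
      (fun u ω (j : ℕ) => X u j ω) P)
    (hnodes_ident : ∀ u : Node,
      Measure.map (fun ω (j : ℕ) => X u j ω) P = Measure.map (fun ω (j : ℕ) => X [] j ω) P)
    (hA1 : iIndepFun (fun j => X [] j) P)
    (l : ℝ) (u : Node) :
    ∫⁻ ω, phi l (birth X u ω) ∂P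
      = ∏ k ∈ Finset.range u.length,
          ∏ j ∈ Finset.range (u.getD k 0 + 1), ∫⁻ ω, phi l (X [] j ω) ∂P := by
  classical
  -- one-node integral
  have hsingle : ∀ (v : Node) (a : ℕ),
      ∫⁻ ω, phi l (∑ j ∈ Finset.range (a + 1), X v j ω) ∂P
        = ∏ j ∈ Finset.range (a + 1), ∫⁻ ω, phi l (X [] j ω) ∂P := by
    intro v a
    have hmeasfn : Measurable fun f : ℕ → ℝ≥0∞ => phi l (∑ j ∈ Finset.range (a + 1), f j) :=
      (measurable_phi l).comp (Finset.measurable_sum _ fun j _ => measurable_pi_apply j)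
    have h1 : ∫⁻ ω, phi l (∑ j ∈ Finset.range (a + 1), X v j ω) ∂P
        = ∫⁻ ω, phi l (∑ j ∈ Finset.range (a + 1), X [] j ω) ∂P := by
      rw [← lintegral_map hmeasfn (measurable_pi_lambda _ fun j => hmeas v j),
        hnodes_ident v,
        lintegral_map hmeasfn (measurable_pi_lambda _ fun j => hmeas [] j)]
    rw [h1]
    have h2 : ∀ ω, phi l (∑ j ∈ Finset.range (a + 1), X [] j ω)
        = ∏ j ∈ Finset.range (a + 1), phi l (X [] j ω) := fun ω => phi_sum l _ _
    calc ∫⁻ ω, phi l (∑ j ∈ Finset.range (a + 1), X [] j ω) ∂P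
        = ∫⁻ ω, ∏ j ∈ Finset.range (a + 1), phi l (X [] j ω) ∂P :=
          lintegral_congr h2
      _ = ∏ j ∈ Finset.range (a + 1), ∫⁻ ω, phi l (X [] j ω) ∂P := by
          exact lintegral_finset_prod_of_iIndepFun P _
            (fun j => (measurable_phi l).comp (hmeas [] j))
            (hA1.comp (fun _ => phi l) (fun _ => measurable_phi l)) _
  set m := u.length with hm
  set idx : Node → ℕ := fun v => u.getD (m - 1 - v.length) 0 with hidx
  set g : Node → (ℕ → ℝ≥0∞) → ℝ≥0∞ :=
    fun v f => phi l (∑ j ∈ Finset.range (idx v + 1), f j) with hg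
  have hgmeas : ∀ v, Measurable (g v) := fun v =>
    (measurable_phi l).comp (Finset.measurable_sum _ fun j _ => measurable_pi_apply j)
  set F : Node → Ω → ℝ≥0∞ := fun v ω => g v (fun j => X v j ω) with hF
  have hFmeas : ∀ v, Measurable (F v) := fun v =>
    (hgmeas v).comp (measurable_pi_lambda _ fun j => hmeas v j)
  have hFind : iIndepFun F P :=
    hnodes_indep.comp g hgmeas
  have hD : ∀ k ∈ Finset.range m, idx (u.drop (k + 1)) = u.getD k 0 := by
    intro k hk
    simp only [Finset.mem_range] at hk
    have h : m - 1 - (u.drop (k + 1)).length = k := by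
      rw [List.length_drop, ← hm]; omega
    rw [hidx]; simp only [h]
  have key : ∀ ω, phi l (birth X u ω) = ∏ k ∈ Finset.range m, F (u.drop (k + 1)) ω := by
    intro ω
    rw [phi_birth_eq]
    apply Finset.prod_congr rfl
    intro k hk
    rw [hF]; simp only [hg, hD k hk]
  have hinj : ∀ k ∈ Finset.range m, ∀ k' ∈ Finset.range m,
      u.drop (k + 1) = u.drop (k' + 1) → k = k' := by
    intro k hk k' hk' h
    have hlen := congrArg List.length h
    simp only [List.length_drop] at hlen
    simp only [Finset.mem_range] at hk hk'
    omega
  calc ∫⁻ ω, phi l (birth X u ω) ∂P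
      = ∫⁻ ω, ∏ v ∈ (Finset.range m).image (fun k => u.drop (k + 1)), F v ω ∂P := by
        apply lintegral_congr
        intro ω
        rw [key ω, Finset.prod_image hinj]
    _ = ∏ v ∈ (Finset.range m).image (fun k => u.drop (k + 1)), ∫⁻ ω, F v ω ∂P :=
        lintegral_finset_prod_of_iIndepFun P F hFmeas hFind _
    _ = ∏ k ∈ Finset.range m, ∫⁻ ω, F (u.drop (k + 1)) ω ∂P := Finset.prod_image hinj
    _ = ∏ k ∈ Finset.range m,
          ∏ j ∈ Finset.range (u.getD k 0 + 1), ∫⁻ ω, phi l (X [] j ω) ∂P := by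
        apply Finset.prod_congr rfl
        intro k hk
        have : ∀ ω, F (u.drop (k + 1)) ω
            = phi l (∑ j ∈ Finset.range (u.getD k 0 + 1), X (u.drop (k + 1)) j ω) := by
          intro ω; rw [hF]; simp only [hg, hD k hk]
        rw [lintegral_congr this, hsingle]


/-! ### Counting sums over lists -/

lemma tsum_pi_fin (b : ℕ → ℝ≥0∞) :
    ∀ n : ℕ, ∑' f : Fin n → ℕ, ∏ i, b (f i) = (∑' a : ℕ, b a) ^ n := by
  intro n
  induction n with
  | zero =>
    rw [pow_zero]
    have h1 : ∀ f : Fin 0 → ℕ, (∏ i, b (f i)) = 1 := fun f => by simp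
    rw [tsum_congr h1]
    exact tsum_eq_single (fun i => i.elim0)
      (fun f hf => absurd (Subsingleton.elim f _) hf)
  | succ n ih =>
    calc ∑' f : Fin (n + 1) → ℕ, ∏ i, b (f i)
        = ∑' p : ℕ × (Fin n → ℕ), ∏ i, b ((Fin.cons p.1 p.2 : Fin (n+1) → ℕ) i) :=
          ((Fin.consEquiv (fun _ : Fin (n + 1) => ℕ)).tsum_eq
            (fun f => ∏ i, b (f i))).symm
      _ = ∑' p : ℕ × (Fin n → ℕ), b p.1 * ∏ i, b (p.2 i) := by
          apply tsum_congr
          rintro ⟨x, f⟩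
          rw [Fin.prod_univ_succ]
          simp
      _ = ∑' x : ℕ, ∑' f : Fin n → ℕ, b x * ∏ i, b (f i) := ENNReal.tsum_prod'
      _ = (∑' a : ℕ, b a) * ∑' f : Fin n → ℕ, ∏ i, b (f i) := by
          simp_rw [ENNReal.tsum_mul_left]
          rw [ENNReal.tsum_mul_right, mul_comm]
      _ = (∑' a : ℕ, b a) ^ (n + 1) := by rw [ih, pow_succ, mul_comm]

lemma tsum_moderate (b : ℕ → ℝ≥0∞) (K : ℕ) :
    ∑' u : Node, (if ∀ i ∈ u, i + 1 ≤ K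
        then ∏ k ∈ Finset.range u.length, b (u.getD k 0) else 0)
      = ∑' n : ℕ, (∑ a ∈ Finset.range K, b a) ^ n := by
  classical
  set b' : ℕ → ℝ≥0∞ := fun a => if a + 1 ≤ K then b a else 0 with hb'
  have hstep : ∀ u : Node,
      (if ∀ i ∈ u, i + 1 ≤ K then ∏ k ∈ Finset.range u.length, b (u.getD k 0) else 0)
        = ∏ k ∈ Finset.range u.length, b' (u.getD k 0) := by
    intro u
    by_cases hmod : ∀ i ∈ u, i + 1 ≤ K
    · rw [if_pos hmod]
      apply Finset.prod_congr rfl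
      intro k hk
      simp only [Finset.mem_range] at hk
      have hmem : u.getD k 0 ∈ u := by
        rw [List.getD_eq_getElem _ _ hk]
        exact List.getElem_mem hk
      rw [hb']; simp only [if_pos (hmod _ hmem)]
    · rw [if_neg hmod]
      push_neg at hmod
      obtain ⟨i, hi, hik⟩ := hmod
      obtain ⟨k, hk, hke⟩ := List.mem_iff_getElem.mp hi
      refine (Finset.prod_eq_zero (Finset.mem_range.mpr hk) ?_).symm
      rw [List.getD_eq_getElem _ _ hk, hke, hb']
      exact if_neg (by omega)
  rw [tsum_congr hstep]
  calc ∑' u : Node, ∏ k ∈ Finset.range u.length, b' (u.getD k 0)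
      = ∑' σ : Σ n : ℕ, Fin n → ℕ,
          ∏ k ∈ Finset.range (List.equivSigmaTuple.symm σ : Node).length,
            b' ((List.equivSigmaTuple.symm σ : Node).getD k 0) :=
        ((List.equivSigmaTuple (α := ℕ)).symm.tsum_eq
          (fun u : Node => ∏ k ∈ Finset.range u.length, b' (u.getD k 0))).symm
    _ = ∑' n : ℕ, ∑' f : Fin n → ℕ,
          ∏ k ∈ Finset.range (List.ofFn f).length, b' ((List.ofFn f).getD k 0) := by
        rw [ENNReal.tsum_sigma']
        rfl
    _ = ∑' n : ℕ, ∑' f : Fin n → ℕ, ∏ i, b' (f i) := by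
        apply tsum_congr; intro n
        apply tsum_congr; intro f
        rw [List.length_ofFn,
          ← Fin.prod_univ_eq_prod_range (fun k => b' ((List.ofFn f).getD k 0)) n]
        apply Finset.prod_congr rfl
        intro i _
        congr 1
        rw [List.getD_eq_getElem _ _ (by simp), List.getElem_ofFn]
    _ = ∑' n : ℕ, (∑' a : ℕ, b' a) ^ n := by
        apply tsum_congr; intro n; exact tsum_pi_fin b' n
    _ = ∑' n : ℕ, (∑ a ∈ Finset.range K, b a) ^ n := by
        apply tsum_congr; intro n
        congr 1
        rw [tsum_eq_sum (s := Finset.range K) (fun a ha => by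
          rw [hb']
          simp only [Finset.mem_range] at ha
          exact if_neg (by omega))]
        exact Finset.sum_congr rfl fun a ha => by
          rw [hb']
          exact if_pos (Finset.mem_range.mp ha)

/-- under Assumption A, for any `K`, almost surely, for every finite time
`t` the set of `K`-moderate individuals born before time `t` is finite. (An individual
`u` is `K`-moderate if all of its (paper, i.e. `1`-based) coordinates are at most `K`;
in the reversed `0`-based encoding this reads `i + 1 ≤ K` for every entry `i` of `u`.) -/
theorem moderate_finite
    (P : Measure Ω) [IsProbabilityMeasure P]
    (X : Node → ℕ → Ω → ℝ≥0∞)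
    (hmeas : ∀ u j, Measurable (X u j))
    -- the sequences `(X(u ·))_u` are i.i.d. across nodes
    (hnodes_indep : iIndepFun
      (fun u ω (j : ℕ) => X u j ω) P)
    (hnodes_ident : ∀ u : Node,
      Measure.map (fun ω (j : ℕ) => X u j ω) P = Measure.map (fun ω (j : ℕ) => X [] j ω) P)
    -- Assumption A (i): the waiting times `X_j` are mutually independent
    (hA1 : iIndepFun (fun j => X [] j) P)
    -- Assumption A (ii): `X_j < ∞` almost surely
    (hA2 : ∀ j : ℕ, ∀ᵐ ω ∂P, X [] j ω < ⊤)
    -- Assumption A (iii): `∑_{j=1}^∞ ∏_{i=1}^{j} P(X_i = 0) < 1`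
    (hA3 : ∑' j : ℕ, ∏ i ∈ Finset.range (j + 1), P {ω | X [] i ω = 0} < 1)
    (K : ℕ) (hK : 1 ≤ K) :
    ∀ᵐ ω ∂P, ∀ t : ℝ≥0∞, t < ⊤ →
      {u : Node | u ∈ tree X t ω ∧ ∀ i ∈ u, i + 1 ≤ K}.Finite := by
  classical
  set p : ℕ → ℝ≥0∞ := fun j => P {ω | X [] j ω = 0} with hp
  set alf : ℝ → ℕ → ℝ≥0∞ := fun l j => ∫⁻ ω, phi l (X [] j ω) ∂P with half
  have halpha_tendsto : ∀ j, Tendsto (fun m : ℕ => alf m j) atTop (𝓝 (p j)) := by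
    intro j
    have hXj := hmeas [] j
    have hdct := tendsto_lintegral_of_dominated_convergence (μ := P)
      (F := fun m ω => phi m (X [] j ω))
      (f := fun ω => if X [] j ω = 0 then 1 else 0)
      (bound := fun _ => 1)
      (fun m => (measurable_phi _).comp hXj)
      (fun m => ae_of_all _ fun ω => phi_le_one _ (Nat.cast_nonneg m) _)
      (by simp)
      (ae_of_all _ fun ω => phi_tendsto _)
    have hlim : ∫⁻ ω, (if X [] j ω = 0 then (1 : ℝ≥0∞) else 0) ∂P = p j := by
      have hsmeas : MeasurableSet {ω | X [] j ω = 0} := hXj (measurableSet_singleton 0)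
      rw [show (fun ω => if X [] j ω = 0 then (1 : ℝ≥0∞) else 0)
          = Set.indicator {ω | X [] j ω = 0} (fun _ => 1) from by
        funext ω
        rw [Set.indicator_apply]
        rfl]
      exact lintegral_indicator_one hsmeas
    rw [hlim] at hdct
    exact hdct
  set bet : ℝ → ℕ → ℝ≥0∞ := fun l a => ∏ j ∈ Finset.range (a + 1), alf l j with hbet
  have hL : (∑ i ∈ Finset.range K, ∏ j ∈ Finset.range (i + 1), p j) < 1 :=
    lt_of_le_of_lt (ENNReal.sum_le_tsum _) hA3
  have hsum_tendsto : Tendsto (fun m : ℕ => ∑ i ∈ Finset.range K, bet m i) atTop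
      (𝓝 (∑ i ∈ Finset.range K, ∏ j ∈ Finset.range (i + 1), p j)) := by
    apply tendsto_finset_sum
    intro i _
    exact ENNReal.tendsto_finset_prod_of_ne_top _
      (fun j _ => halpha_tendsto j) (fun j _ => measure_ne_top P _)
  obtain ⟨m0, hm0⟩ := (Filter.Tendsto.eventually_lt_const hL hsum_tendsto).exists
  set l : ℝ := (m0 : ℝ) with hldef
  have hl0 : (0 : ℝ) ≤ l := Nat.cast_nonneg m0
  set s : ℝ≥0∞ := ∑ i ∈ Finset.range K, bet l i with hsdef
  have hs1 : s < 1 := hm0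
  have main : ∀ n : ℕ, ∀ᵐ ω ∂P,
      {u : Node | (∀ i ∈ u, i + 1 ≤ K) ∧ birth X u ω ≤ (n : ℝ≥0∞)}.Finite := by
    intro n
    set C : ℝ≥0∞ := ENNReal.ofReal (Real.exp (l * n)) with hC
    set G : Node → Ω → ℝ≥0∞ := fun u ω =>
      if (∀ i ∈ u, i + 1 ≤ K) ∧ birth X u ω ≤ (n : ℝ≥0∞) then 1 else 0 with hG
    have hGmeas : ∀ u, Measurable (G u) := by
      intro u
      by_cases hmod : ∀ i ∈ u, i + 1 ≤ K
      · have h : G u = fun ω => if birth X u ω ≤ (n : ℝ≥0∞) then 1 else 0 := by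
          funext ω
          simp only [hG]
          exact if_congr (and_iff_right hmod) rfl rfl
        rw [h]
        exact Measurable.ite (measurableSet_le (birth_measurable X hmeas u) measurable_const)
          measurable_const measurable_const
      · have h : G u = fun _ => 0 := by funext ω; simp only [hG, hmod, false_and, if_false]
        rw [h]; exact measurable_const
    have hGle : ∀ u, ∫⁻ ω, G u ω ∂P ≤
        (if ∀ i ∈ u, i + 1 ≤ K
          then C * ∏ k ∈ Finset.range u.length, bet l (u.getD k 0) else 0) := by
      intro u
      by_cases hmod : ∀ i ∈ u, i + 1 ≤ K
      · rw [if_pos hmod]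
        have hpt : ∀ ω, G u ω ≤ C * phi l (birth X u ω) := by
          intro ω
          simp only [hG]
          by_cases hb : birth X u ω ≤ (n : ℝ≥0∞)
          · rw [if_pos ⟨hmod, hb⟩]
            exact one_le_mul_phi l hl0 n hb
          · rw [if_neg (by tauto)]
            exact zero_le
        calc ∫⁻ ω, G u ω ∂P ≤ ∫⁻ ω, C * phi l (birth X u ω) ∂P := lintegral_mono hpt
          _ = C * ∫⁻ ω, phi l (birth X u ω) ∂P :=
            lintegral_const_mul C ((measurable_phi l).comp (birth_measurable X hmeas u))
          _ = C * ∏ k ∈ Finset.range u.length, bet l (u.getD k 0) := by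
            rw [lintegral_phi_birth P X hmeas hnodes_indep hnodes_ident hA1 l u]
      · have h0 : ∀ ω, G u ω = 0 := fun ω => by
          simp only [hG, hmod, false_and, if_false]
        rw [if_neg hmod, lintegral_congr h0]
        simp
    have htot : ∫⁻ ω, ∑' u : Node, G u ω ∂P < ⊤ := by
      rw [lintegral_tsum (fun u => (hGmeas u).aemeasurable)]
      have h2 : ∑' u : Node, (if ∀ i ∈ u, i + 1 ≤ K
            then C * ∏ k ∈ Finset.range u.length, bet l (u.getD k 0) else 0)
          = C * ∑' u : Node, (if ∀ i ∈ u, i + 1 ≤ K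
            then ∏ k ∈ Finset.range u.length, bet l (u.getD k 0) else 0) := by
        rw [← ENNReal.tsum_mul_left]
        apply tsum_congr; intro u
        by_cases hmod : ∀ i ∈ u, i + 1 ≤ K <;> simp [hmod]
      calc ∑' u : Node, ∫⁻ ω, G u ω ∂P
          ≤ ∑' u : Node, (if ∀ i ∈ u, i + 1 ≤ K
              then C * ∏ k ∈ Finset.range u.length, bet l (u.getD k 0) else 0) :=
            ENNReal.tsum_le_tsum hGle
        _ = C * ∑' u : Node, (if ∀ i ∈ u, i + 1 ≤ K
              then ∏ k ∈ Finset.range u.length, bet l (u.getD k 0) else 0) := h2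
        _ = C * ∑' n : ℕ, s ^ n := by rw [tsum_moderate (bet l) K]
        _ = C * (1 - s)⁻¹ := by rw [ENNReal.tsum_geometric]
        _ < ⊤ := by
            apply ENNReal.mul_lt_top
            · exact ENNReal.ofReal_lt_top
            · exact ENNReal.inv_lt_top.2 (tsub_pos_iff_lt.mpr hs1)
    have hae := ae_lt_top (Measurable.ennreal_tsum hGmeas) htot.ne
    filter_upwards [hae] with ω hω
    by_contra hinf
    have henc : Set.encard {u : Node | (∀ i ∈ u, i + 1 ≤ K)
        ∧ birth X u ω ≤ (n : ℝ≥0∞)} = ⊤ := Set.encard_eq_top hinf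
    have hles : ∀ u : Node,
        Set.indicator {u : Node | (∀ i ∈ u, i + 1 ≤ K) ∧ birth X u ω ≤ (n : ℝ≥0∞)}
          (fun _ => (1 : ℝ≥0∞)) u ≤ G u ω := by
      intro u
      simp only [Set.indicator_apply, Set.mem_setOf_eq, hG]
      by_cases h : (∀ i ∈ u, i + 1 ≤ K) ∧ birth X u ω ≤ (n : ℝ≥0∞)
      · simp only [if_pos h]
        exact le_refl _
      · rw [if_neg h]
    have htop : (⊤ : ℝ≥0∞) ≤ ∑' u : Node, G u ω := by
      calc (⊤ : ℝ≥0∞)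
          = (Set.encard {u : Node | (∀ i ∈ u, i + 1 ≤ K)
              ∧ birth X u ω ≤ (n : ℝ≥0∞)} : ℝ≥0∞) := by rw [henc]; simp
        _ = ∑' _ : {u : Node | (∀ i ∈ u, i + 1 ≤ K) ∧ birth X u ω ≤ (n : ℝ≥0∞)},
              (1 : ℝ≥0∞) := (ENNReal.tsum_set_one _).symm
        _ = ∑' u : Node,
              Set.indicator {u : Node | (∀ i ∈ u, i + 1 ≤ K) ∧ birth X u ω ≤ (n : ℝ≥0∞)}
                (fun _ => (1 : ℝ≥0∞)) u := by
          exact tsum_subtype {u : Node | (∀ i ∈ u, i + 1 ≤ K) ∧ birth X u ω ≤ (n : ℝ≥0∞)}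
            (fun _ => (1 : ℝ≥0∞))
        _ ≤ ∑' u : Node, G u ω := ENNReal.tsum_le_tsum hles
    exact absurd hω (by rw [top_le_iff.mp htop]; exact lt_irrefl _)
  have main' : ∀ᵐ ω ∂P, ∀ n : ℕ,
      {u : Node | (∀ i ∈ u, i + 1 ≤ K) ∧ birth X u ω ≤ (n : ℝ≥0∞)}.Finite :=
    (ae_all_iff).mpr main
  filter_upwards [main'] with ω hω t ht
  obtain ⟨n, hn⟩ := ENNReal.exists_nat_gt ht.ne
  apply (hω n).subset
  intro u hu
  exact ⟨hu.2, le_trans hu.1 hn.le⟩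


end CMJ
end
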